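/- Let X, Θ be finite sets with fully supported probability vectors ν on X and μ on Θ, and let c : X × Θ → ℝ. Suppose a joint probability P with marginals P|_ξ = ν, P|_θ = μ satisfies P(ξ,θ) = ν(ξ) μ(θ) e^{−a(ξ) − b(θ) − c(ξ,θ)} for some functions a : X → ℝ and b : Θ → ℝ (Schrödinger potentials). Then P is the unique minimizer of Q ↦ Σ_{ξ,θ} Q(ξ,θ) c(ξ,θ) + D_KL(Q ∥ ν ⊗ μ) over all joint probabilities Q with Q|_ξ = ν and Q|_θ = μ. -/
import Mathlib


open Finset Real

/-- Entropic optimal transport cost: `Σ Q c + D_KL(Q ∥ ν ⊗ μ)` (finite case,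
with the `0 log 0 = 0` convention handled by multiplication by zero). -/
noncomputable def eotCost {X Θ : Type*} [Fintype X] [Fintype Θ]
    (c : X → Θ → ℝ) (ν : X → ℝ) (μ : Θ → ℝ) (Q : X → Θ → ℝ) : ℝ :=
  (∑ ξ, ∑ θ, Q ξ θ * c ξ θ) + ∑ ξ, ∑ θ, Q ξ θ * Real.log (Q ξ θ / (ν ξ * μ θ))

private lemma key_ineq (p q : ℝ) (hp : 0 < p) (hq : 0 ≤ q) :
    q - p ≤ q * Real.log (q / p) ∧ (q - p = q * Real.log (q / p) → q = p) := by
  rcases eq_or_lt_of_le hq with h0 | h0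
  · refine ⟨?_, ?_⟩
    · rw [← h0]; simp; linarith
    · intro h; rw [← h0] at h; simp at h; linarith
  · have hx : 0 < p / q := div_pos hp h0
    have hlq : Real.log (q / p) = - Real.log (p / q) := by
      rw [← Real.log_inv]; congr 1; field_simp
    constructor
    · have hlog : Real.log (p / q) ≤ p / q - 1 := Real.log_le_sub_one_of_pos hx
      have := mul_le_mul_of_nonneg_left hlog (le_of_lt h0)
      rw [hlq]
      have hq' : q * (p / q - 1) = p - q := by field_simp
      nlinarith
    · intro heq
      by_contra hne
      have hne1 : p / q ≠ 1 := by
        intro h1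
        apply hne
        field_simp at h1
        linarith
      have hstrict : Real.log (p / q) < p / q - 1 :=
        Real.log_lt_sub_one_of_pos hx hne1
      have := mul_lt_mul_of_pos_left hstrict h0
      rw [hlq] at heq
      have hq' : q * (p / q - 1) = p - q := by field_simp
      nlinarith

theorem schrodinger_potentials_sufficiency
    {X Θ : Type*} [Fintype X] [Fintype Θ]
    (ν : X → ℝ) (hν0 : ∀ ξ, 0 < ν ξ) (hν1 : ∑ ξ, ν ξ = 1)
    (μ : Θ → ℝ) (hμ0 : ∀ θ, 0 < μ θ) (hμ1 : ∑ θ, μ θ = 1)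
    (c : X → Θ → ℝ) (a : X → ℝ) (b : Θ → ℝ)
    (P : X → Θ → ℝ)
    (hP : ∀ ξ θ, P ξ θ = ν ξ * μ θ * Real.exp (-a ξ - b θ - c ξ θ))
    (hPν : ∀ ξ, ∑ θ, P ξ θ = ν ξ) (hPμ : ∀ θ, ∑ ξ, P ξ θ = μ θ) :
    ∀ Q : X → Θ → ℝ, (∀ ξ θ, 0 ≤ Q ξ θ) →
      (∀ ξ, ∑ θ, Q ξ θ = ν ξ) → (∀ θ, ∑ ξ, Q ξ θ = μ θ) →
      eotCost c ν μ P ≤ eotCost c ν μ Q ∧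
        (eotCost c ν μ Q = eotCost c ν μ P → Q = P) := by
  intro Q hQ0 hQν hQμ
  have hPpos : ∀ ξ θ, 0 < P ξ θ := fun ξ θ => by
    rw [hP]; exact mul_pos (mul_pos (hν0 ξ) (hμ0 θ)) (Real.exp_pos _)
  -- pointwise identity
  have point : ∀ (R : X → Θ → ℝ), (∀ ξ θ, 0 ≤ R ξ θ) → ∀ ξ θ,
      R ξ θ * c ξ θ + R ξ θ * Real.log (R ξ θ / (ν ξ * μ θ))
        = R ξ θ * Real.log (R ξ θ / P ξ θ) - R ξ θ * (a ξ + b θ) := by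
    intro R hR ξ θ
    rcases eq_or_lt_of_le (hR ξ θ) with h0 | h0
    · rw [← h0]; ring
    · have hνμ : 0 < ν ξ * μ θ := mul_pos (hν0 ξ) (hμ0 θ)
      have hlogP : Real.log (P ξ θ) = Real.log (ν ξ * μ θ) + (-a ξ - b θ - c ξ θ) := by
        rw [hP, Real.log_mul (ne_of_gt hνμ) (Real.exp_ne_zero _), Real.log_exp]
      rw [Real.log_div (ne_of_gt h0) (ne_of_gt hνμ),
          Real.log_div (ne_of_gt h0) (ne_of_gt (hPpos ξ θ)), hlogP]
      ring
  -- sum identity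
  have sumId : ∀ (R : X → Θ → ℝ), (∀ ξ θ, 0 ≤ R ξ θ) →
      (∀ ξ, ∑ θ, R ξ θ = ν ξ) → (∀ θ, ∑ ξ, R ξ θ = μ θ) →
      eotCost c ν μ R
        = (∑ ξ, ∑ θ, R ξ θ * Real.log (R ξ θ / P ξ θ))
            - ((∑ ξ, ν ξ * a ξ) + ∑ θ, μ θ * b θ) := by
    intro R hR hRν hRμ
    have h1 : eotCost c ν μ R
        = ∑ ξ, ∑ θ, (R ξ θ * Real.log (R ξ θ / P ξ θ) - R ξ θ * (a ξ + b θ)) := by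
      unfold eotCost
      rw [← Finset.sum_add_distrib]
      refine Finset.sum_congr rfl fun ξ _ => ?_
      rw [← Finset.sum_add_distrib]
      exact Finset.sum_congr rfl fun θ _ => point R hR ξ θ
    rw [h1]
    have h2 : ∑ ξ, ∑ θ, R ξ θ * (a ξ + b θ)
        = (∑ ξ, ν ξ * a ξ) + ∑ θ, μ θ * b θ := by
      have : ∀ ξ θ, R ξ θ * (a ξ + b θ) = R ξ θ * a ξ + R ξ θ * b θ :=
        fun ξ θ => by ring
      simp_rw [this, Finset.sum_add_distrib]
      congr 1
      · refine Finset.sum_congr rfl fun ξ _ => ?_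
        rw [← Finset.sum_mul, hRν ξ]
      · rw [Finset.sum_comm]
        refine Finset.sum_congr rfl fun θ _ => ?_
        rw [← Finset.sum_mul, hRμ θ]
    rw [← h2, ← Finset.sum_sub_distrib]
    refine Finset.sum_congr rfl fun ξ _ => ?_
    rw [← Finset.sum_sub_distrib]
  have hP0 : ∀ ξ θ, 0 ≤ P ξ θ := fun ξ θ => (hPpos ξ θ).le
  have hPcost : eotCost c ν μ P = - ((∑ ξ, ν ξ * a ξ) + ∑ θ, μ θ * b θ) := by
    rw [sumId P hP0 hPν hPμ]
    have : ∀ ξ θ, P ξ θ * Real.log (P ξ θ / P ξ θ) = 0 := fun ξ θ => by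
      rw [div_self (ne_of_gt (hPpos ξ θ))]; simp
    simp_rw [this]
    simp
  have hQcost := sumId Q hQ0 hQν hQμ
  -- diff = sum of nonneg terms
  have hdiff : eotCost c ν μ Q - eotCost c ν μ P
      = ∑ ξ, ∑ θ, (Q ξ θ * Real.log (Q ξ θ / P ξ θ) - (Q ξ θ - P ξ θ)) := by
    rw [hQcost, hPcost]
    have hm : (∑ ξ, ∑ θ, Q ξ θ) - ∑ ξ, ∑ θ, P ξ θ = 0 := by
      simp [hQν, hPν]
    simp_rw [Finset.sum_sub_distrib]
    linarith
  have hterm : ∀ ξ θ, 0 ≤ Q ξ θ * Real.log (Q ξ θ / P ξ θ) - (Q ξ θ - P ξ θ) := by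
    intro ξ θ
    have := (key_ineq (P ξ θ) (Q ξ θ) (hPpos ξ θ) (hQ0 ξ θ)).1
    linarith
  have hsum_nonneg : 0 ≤ ∑ ξ, ∑ θ, (Q ξ θ * Real.log (Q ξ θ / P ξ θ) - (Q ξ θ - P ξ θ)) :=
    Finset.sum_nonneg fun ξ _ => Finset.sum_nonneg fun θ _ => hterm ξ θ
  constructor
  · linarith
  · intro heq
    have hzero : ∑ ξ, ∑ θ, (Q ξ θ * Real.log (Q ξ θ / P ξ θ) - (Q ξ θ - P ξ θ)) = 0 := by
      linarith [hdiff, heq]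
    funext ξ
    funext θ
    have h1 := (Finset.sum_eq_zero_iff_of_nonneg
      (fun ξ _ => Finset.sum_nonneg fun θ _ => hterm ξ θ)).mp hzero ξ (Finset.mem_univ ξ)
    have h2 := (Finset.sum_eq_zero_iff_of_nonneg
      (fun θ _ => hterm ξ θ)).mp h1 θ (Finset.mem_univ θ)
    exact (key_ineq (P ξ θ) (Q ξ θ) (hPpos ξ θ) (hQ0 ξ θ)).2 (by linarith)
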